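/- Fix a positive integer N, n ≥ 1, reals c_I, c_R, λ > 0, c_F > 0, a₁ > 0 with a₁ ≠ 1, a₂ > 0 with a₁a₂ ≠ 1, nonnegative reals c_{f,k}, c_k, α_k, β_k for k = 1,…,n, and functions F_j : (0,∞) → ℝ for j = 1,…,N. Define Q₀(T) = c_I/T + c_R/(N T) + ((a₁^N − 1)/((a₁ − 1) λ N T)) ∑_{k=1}^{n} c_{f,k} + (((a₁ a₂)^N − 1)/(λ N (a₁ a₂ − 1))) ∑_{k=1}^{n} c_k α_k β_k + (c_F/(λ N T)) ∑_{j=1}^{N} a₁^{j−1} F_j(T) for T > 0. If T* > 0 is a local minimum of Q₀ and each F_j is differentiable at T* with derivative f_j(T*), then ∑_{j=1}^{N} a₁^{j−1} ( f_j(T*) T* − F_j(T*) ) = (λ/c_F) ( N c_I + ((a₁^N − 1)/(λ(a₁ − 1))) ∑_{k=1}^{n} c_{f,k} + c_R ). -/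

import Mathlib

open Finset

/-- First-order necessary condition for an interior optimal inspection
interval: if `T* > 0` is a local minimum of
`Q₀(T) = c_I/T + c_R/(NT) + ((a₁^N - 1)/((a₁-1)λNT)) ∑ c_{f,k}
  + (((a₁a₂)^N - 1)/(λN(a₁a₂-1))) ∑ c_k α_k β_k + (c_F/(λNT)) ∑_{j=1}^N a₁^{j-1} F_j(T)`
and each `F_j` is differentiable at `T*` with derivative `f_j(T*)`, then
`∑_{j=1}^N a₁^{j-1} (f_j(T*) T* - F_j(T*))
  = (λ/c_F) (N c_I + ((a₁^N - 1)/(λ(a₁-1))) ∑ c_{f,k} + c_R)`. -/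
theorem first_order_condition_optimal_inspection_interval
    (N : ℕ) (hN : 1 ≤ N) (n : ℕ) (hn : 1 ≤ n)
    (cI cR lam cF : ℝ) (hcI : 0 < cI) (hcR : 0 < cR) (hlam : 0 < lam) (hcF : 0 < cF)
    (a₁ a₂ : ℝ) (ha₁pos : 0 < a₁) (ha₁ : a₁ ≠ 1) (ha₂pos : 0 < a₂) (ha : a₁ * a₂ ≠ 1)
    (cf c α β : Fin n → ℝ)
    (hcf : ∀ k, 0 ≤ cf k) (hc : ∀ k, 0 ≤ c k) (hα : ∀ k, 0 ≤ α k) (hβ : ∀ k, 0 ≤ β k)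
    (F : ℕ → ℝ → ℝ) (f : ℕ → ℝ)
    (Q₀ : ℝ → ℝ)
    (hQ₀ : ∀ T : ℝ, 0 < T → Q₀ T =
      cI / T + cR / ((N : ℝ) * T) +
        ((a₁ ^ N - 1) / ((a₁ - 1) * lam * N * T)) * ∑ k, cf k +
        (((a₁ * a₂) ^ N - 1) / (lam * N * (a₁ * a₂ - 1))) * ∑ k, c k * α k * β k +
        (cF / (lam * N * T)) * ∑ j ∈ Finset.Icc 1 N, a₁ ^ (j - 1) * F j T)
    (Tstar : ℝ) (hTstar : 0 < Tstar) (hmin : IsLocalMin Q₀ Tstar)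
    (hderiv : ∀ j ∈ Finset.Icc 1 N, HasDerivAt (F j) (f j) Tstar) :
    ∑ j ∈ Finset.Icc 1 N, a₁ ^ (j - 1) * (f j * Tstar - F j Tstar) =
      (lam / cF) *
        ((N : ℝ) * cI + ((a₁ ^ N - 1) / (lam * (a₁ - 1))) * ∑ k, cf k + cR) := by
  have hT0 : Tstar ≠ 0 := hTstar.ne'
  have hN0 : (N : ℝ) ≠ 0 := Nat.cast_ne_zero.mpr (by omega)
  have hl0 : lam ≠ 0 := hlam.ne'
  have hcF0 : cF ≠ 0 := hcF.ne'
  have ha10 : a₁ - 1 ≠ 0 := sub_ne_zero.mpr ha₁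
  -- derivative of each piece
  have h1 : HasDerivAt (fun T : ℝ => cI / T) ((0 * Tstar - cI * 1) / Tstar ^ 2) Tstar :=
    (hasDerivAt_const _ cI).div (hasDerivAt_id _) hT0
  have h2 : HasDerivAt (fun T : ℝ => cR / ((N : ℝ) * T))
      ((0 * ((N : ℝ) * Tstar) - cR * ((N : ℝ) * 1)) / ((N : ℝ) * Tstar) ^ 2) Tstar :=
    (hasDerivAt_const _ cR).div ((hasDerivAt_id _).const_mul _)
      (mul_ne_zero hN0 hT0)
  have h3 : HasDerivAt (fun T : ℝ => ((a₁ ^ N - 1) / ((a₁ - 1) * lam * N * T)) * ∑ k, cf k)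
      (((0 * ((a₁ - 1) * lam * N * Tstar) - (a₁ ^ N - 1) * ((a₁ - 1) * lam * N * 1)) /
        ((a₁ - 1) * lam * N * Tstar) ^ 2) * ∑ k, cf k) Tstar :=
    (((hasDerivAt_const _ (a₁ ^ N - 1)).div ((hasDerivAt_id _).const_mul _)
      (mul_ne_zero (mul_ne_zero (mul_ne_zero ha10 hl0) hN0) hT0))).mul_const _
  have h4 : HasDerivAt (fun _ : ℝ =>
      (((a₁ * a₂) ^ N - 1) / (lam * N * (a₁ * a₂ - 1))) * ∑ k, c k * α k * β k) 0 Tstar :=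
    hasDerivAt_const _ _
  have hS : HasDerivAt (fun T : ℝ => ∑ j ∈ Finset.Icc 1 N, a₁ ^ (j - 1) * F j T)
      (∑ j ∈ Finset.Icc 1 N, a₁ ^ (j - 1) * f j) Tstar :=
    HasDerivAt.fun_sum (fun j hj => ((hderiv j hj).const_mul _))
  have h5 : HasDerivAt (fun T : ℝ =>
      (cF / (lam * N * T)) * ∑ j ∈ Finset.Icc 1 N, a₁ ^ (j - 1) * F j T)
      (((0 * (lam * N * Tstar) - cF * (lam * N * 1)) / (lam * N * Tstar) ^ 2) *
        (∑ j ∈ Finset.Icc 1 N, a₁ ^ (j - 1) * F j Tstar) +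
        (cF / (lam * N * Tstar)) * ∑ j ∈ Finset.Icc 1 N, a₁ ^ (j - 1) * f j) Tstar :=
    ((hasDerivAt_const _ cF).div ((hasDerivAt_id _).const_mul _)
      (mul_ne_zero (mul_ne_zero hl0 hN0) hT0)).mul hS
  have hg := (((h1.add h2).add h3).add h4).add h5
  have heq : Q₀ =ᶠ[nhds Tstar] (fun T : ℝ =>
      cI / T + cR / ((N : ℝ) * T) +
        ((a₁ ^ N - 1) / ((a₁ - 1) * lam * N * T)) * ∑ k, cf k +
        (((a₁ * a₂) ^ N - 1) / (lam * N * (a₁ * a₂ - 1))) * ∑ k, c k * α k * β k +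
        (cF / (lam * N * T)) * ∑ j ∈ Finset.Icc 1 N, a₁ ^ (j - 1) * F j T) := by
    filter_upwards [Ioi_mem_nhds hTstar] with T hT
    exact hQ₀ T hT
  have hQd := hg.congr_of_eventuallyEq heq
  have hzero := hmin.hasDerivAt_eq_zero hQd
  set S := ∑ j ∈ Finset.Icc 1 N, a₁ ^ (j - 1) * F j Tstar with hSdef
  set S' := ∑ j ∈ Finset.Icc 1 N, a₁ ^ (j - 1) * f j with hS'def
  set sc := ∑ k, cf k with hscdef
  have hLHS : ∑ j ∈ Finset.Icc 1 N, a₁ ^ (j - 1) * (f j * Tstar - F j Tstar)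
      = S' * Tstar - S := by
    rw [hSdef, hS'def, Finset.sum_mul, ← Finset.sum_sub_distrib]
    apply Finset.sum_congr rfl
    intro j _
    ring
  field_simp at hzero
  have hfac : (a₁ - 1) * lam ^ 4 * (N : ℝ) ^ 6 * Tstar ^ 7 ≠ 0 := by
    positivity
  have key : cF * (a₁ - 1) * (S' * Tstar - S)
      = (a₁ - 1) * lam * ((N : ℝ) * cI + cR) + (a₁ ^ N - 1) * sc := by
    apply mul_left_cancel₀ hfac
    linear_combination ((a₁ - 1) * lam ^ 4 * (N : ℝ) ^ 6 * Tstar ^ 7) * hzero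
  rw [hLHS]
  field_simp
  linear_combination key
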